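/- Suppose 0 < ε < 1/4. Let P be an equitable partition of the finite 𝓛-structure 𝓜 such that each part of P is ε-excellent, and let E ∈ 𝓛 have arity n. Then there is an n-ary relation E* on M such that for all tuples ⟨p_i⟩_{i<n} of parts of P, |(E Δ E*) ∩ ∏_{i<n} p_i| ≤ n·ε·∏_{i<n}|p_i|, and P is an indivisible partition of the structure (M, E*). -/

import Mathlib

open scoped Classical

noncomputable section

/-- Truth values: true, false, and indeterminate. -/
inductive TV where
  | top : TV
  | bot : TV
  | up  : TV
deriving DecidableEq

/-- A finite relational language. -/
structure RelLanguage where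
  Symb : Type
  [fintypeSymb : Fintype Symb]
  arity : Symb → ℕ

attribute [instance] RelLanguage.fintypeSymb

/-- `q_𝓛`, the maximal arity of a relation symbol. -/
def RelLanguage.q (L : RelLanguage) : ℕ := Finset.univ.sup L.arity

/-- `n_𝓛 = |𝓛| ⬝ q_𝓛`. -/
def RelLanguage.nL (L : RelLanguage) : ℕ := Fintype.card L.Symb * L.q

/-- A structure for a finite relational language, on underlying set `M`. -/
structure RelStructure (L : RelLanguage) (M : Type*) where
  rel : ∀ E : L.Symb, (Fin (L.arity E) → M) → Bool

/-- `M̂ = M ∪ 𝒫(M)`: an argument is either an element of `M` or a subset of `M`. -/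
abbrev Arg (M : Type*) := M ⊕ Finset M

/-- Membership of an element in an argument: equality for elements, membership for sets. -/
def Arg.mem {M : Type*} (a : M) : Arg M → Prop
  | Sum.inl b => a = b
  | Sum.inr s => a ∈ s

/-- The size of an argument: `1` for an element, the cardinality for a set. -/
def Arg.size {M : Type*} : Arg M → ℕ
  | Sum.inl _ => 1
  | Sum.inr s => s.card

variable {M : Type*} [Fintype M] [DecidableEq M]

/-- The ε-partial relation `Ê^m̄_ε`, where the list of indices is given in
*polling order*: the head of the list is the index polled first (outermost),
i.e. the list is the *reverse* of the tuple `m̄` of the paper. -/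
def pollAux (ε : ℝ) {n : ℕ} (R : (Fin n → M) → Bool) :
    List (Fin n) → (Fin n → Arg M) → TV
  | [], A =>
      if h : ∃ f : Fin n → M, ∀ i, A i = Sum.inl (f i) then
        (if R (Classical.choose h) then TV.top else TV.bot)
      else TV.up
  | j :: rest, A =>
      match A j with
      | Sum.inl _ => TV.up
      | Sum.inr Aj =>
          if (((Aj.filter fun a =>
                pollAux ε R rest (Function.update A j (Sum.inl a)) = TV.top).card : ℝ)
              > (1 - ε) * (Aj.card : ℝ)) then TV.top
          else if (((Aj.filter fun a =>
                pollAux ε R rest (Function.update A j (Sum.inl a)) = TV.bot).card : ℝ)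
              > (1 - ε) * (Aj.card : ℝ)) then TV.bot
          else TV.up

/-- The ε-partial relation `Ê^m̄_ε`, with `m̄` given in the paper's order
(the *last* entry of `m̄` is the index polled first). -/
def partialRel (ε : ℝ) {n : ℕ} (R : (Fin n → M) → Bool)
    (mbar : List (Fin n)) (A : Fin n → Arg M) : TV :=
  pollAux ε R mbar.reverse A

/-- The value `Ê^{⟨σ⁻¹(l-1),…,σ⁻¹(1),σ⁻¹(0)⟩}_ε (A_{σ(0)}, …, A_{σ(n-1)})`. -/
def pollValue (ε : ℝ) {n : ℕ} (R : (Fin n → M) → Bool) (l : ℕ)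
    (σ : Equiv.Perm (Fin n)) (A : Fin n → Arg M) : TV :=
  pollAux ε R (((List.finRange n).take l).map σ.symm) fun i => A (σ i)

/-- `(ε, ℓ, E)`-goodness of an argument, for the relation `R` interpreting `E`. -/
def IsGood (ε : ℝ) {n : ℕ} (R : (Fin n → M) → Bool) : ℕ → Arg M → Prop
  | 0, A₀ => A₀.isLeft = true
  | (m+1), A₀ =>
      (∀ k, 1 ≤ k → k < m + 1 → IsGood ε R k A₀) ∧
      (∀ (A : Fin n → Arg M) (σ : Equiv.Perm (Fin n)),
        (∀ i : Fin n, (i : ℕ) = 0 → A i = A₀) →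
        (∀ i : Fin n, 1 ≤ (i : ℕ) → (i : ℕ) < m + 1 →
            (A i).isRight = true ∧ IsGood ε R (m + 1 - (i : ℕ)) (A i)) →
        (∀ i : Fin n, m + 1 ≤ (i : ℕ) → (A i).isLeft = true) →
        pollValue ε R (m + 1) σ A ≠ TV.up)
  termination_by l _ => l
  decreasing_by all_goals omega

/-- `A` is ε-excellent: `(ε, arity(E), E)`-good for every relation symbol `E`. -/
def IsExcellent (ε : ℝ) {L : RelLanguage} (𝓜 : RelStructure L M) (A : Arg M) : Prop :=
  ∀ E : L.Symb, IsGood ε (𝓜.rel E) (L.arity E) A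

/-- `P` is a partition of the finite set `S`. -/
def IsPartition {V : Type*} [DecidableEq V] (P : Finset (Finset V)) (S : Finset V) : Prop :=
  (∀ p ∈ P, p.Nonempty) ∧
  (∀ p ∈ P, ∀ q ∈ P, p ≠ q → Disjoint p q) ∧
  (∀ x, x ∈ S ↔ ∃ p ∈ P, x ∈ p)

/-- A partition is equitable when any two parts differ in size by at most 1. -/
def IsEquitable {V : Type*} (P : Finset (Finset V)) : Prop :=
  ∀ p ∈ P, ∀ q ∈ P, p.card ≤ q.card + 1

/-- Indivisibility of a partition with respect to a single relation. -/
def IndivisibleRel {n : ℕ} (P : Finset (Finset M)) (R : (Fin n → M) → Bool) : Prop :=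
  ∀ p : Fin n → Finset M, (∀ i, p i ∈ P) →
    ∀ a b : Fin n → M, (∀ i, a i ∈ p i) → (∀ i, b i ∈ p i) → R a = R b

/-- Indivisibility of a partition with respect to a structure. -/
def Indivisible {L : RelLanguage} (P : Finset (Finset M)) (𝓝 : RelStructure L M) : Prop :=
  ∀ E : L.Symb, IndivisibleRel P (𝓝.rel E)

/-- The τ-branching property for an `n`-ary relation `R` with the variable partition
`(x_ℓ; the remaining variables)`. -/
def RelBranching {n : ℕ} (R : (Fin n → M) → Bool) (ℓ : Fin n) (τ : ℕ) : Prop :=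
  ∃ (a : List Bool → M) (b : List Bool → (Fin n → M)),
    ∀ i : List Bool, i.length = τ →
      ∀ j : List Bool, j.length < τ → ∀ h : Bool,
        (j ++ [h]) <+: i → (R (Function.update (b j) ℓ (a i)) = h)

/-- `𝓜` does not have the τ-branching property (for any relation symbol and
any singleton variable partition). -/
def NonBranching {L : RelLanguage} (𝓜 : RelStructure L M) (τ : ℕ) : Prop :=
  ∀ (E : L.Symb) (j : Fin (L.arity E)), ¬ RelBranching (𝓜.rel E) j τ

/-- `g = ⌈5 ⬝ n_𝓛 ⬝ τ̂ ⬝ log₂ τ̂⌉`. -/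
def gBound (L : RelLanguage) (τ : ℕ) : ℕ :=
  ⌈5 * (L.nL : ℝ) * (τ : ℝ) * Real.logb 2 (τ : ℝ)⌉₊

/-- A staircase `⟨m_j⟩_{j ≤ k}`. -/
def Staircase (ε : ℝ) (ms : ℕ → ℕ) (k : ℕ) : Prop :=
  (∀ j ≤ k, 0 < ms j) ∧ ∀ j < k, (ms (j + 1) : ℝ) ≤ ε * (ms j : ℝ)

end


noncomputable section AuxLemmas

variable {M : Type*} [Fintype M] [DecidableEq M]

/-- The finite set of elements an argument can take. -/
def argFinset : Arg M → Finset M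
  | Sum.inl b => {b}
  | Sum.inr s => s

lemma pollAux_cons {ε : ℝ} {n : ℕ} {R : (Fin n → M) → Bool} {j : Fin n}
    {rest : List (Fin n)} {A : Fin n → Arg M} {v : Bool}
    (h : pollAux ε R (j :: rest) A = (if v then TV.top else TV.bot)) :
    ∃ Aj : Finset M, A j = Sum.inr Aj ∧
      (1 - ε) * (Aj.card : ℝ) <
        ((Aj.filter fun a =>
            pollAux ε R rest (Function.update A j (Sum.inl a)) =
              (if v then TV.top else TV.bot)).card : ℝ) := by
  rw [pollAux] at h
  rcases hA : A j with b | Aj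
  · rw [hA] at h; cases v <;> simp at h
  · rw [hA] at h
    refine ⟨Aj, rfl, ?_⟩
    set c1 : Prop := ((Aj.filter fun a =>
        pollAux ε R rest (Function.update A j (Sum.inl a)) = TV.top).card : ℝ)
        > (1 - ε) * (Aj.card : ℝ) with hc1
    set c2 : Prop := ((Aj.filter fun a =>
        pollAux ε R rest (Function.update A j (Sum.inl a)) = TV.bot).card : ℝ)
        > (1 - ε) * (Aj.card : ℝ) with hc2
    have h' : (if c1 then TV.top else if c2 then TV.bot else TV.up)
        = (if v then TV.top else TV.bot) := h
    clear h; rename' h' => h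
    by_cases h1 : c1
    · rw [if_pos h1] at h
      cases v
      · simp at h
      · exact h1
    · rw [if_neg h1] at h
      by_cases h2 : c2
      · rw [if_pos h2] at h
        cases v
        · exact h2
        · simp at h
      · rw [if_neg h2] at h
        cases v <;> simp at h

/-- Key counting lemma: if the poll returns a definite value `v`, then the
number of tuples in the box that disagree with `v` is small. -/
lemma pollAux_count (ε : ℝ) (hε0 : 0 < ε) {n : ℕ} (R : (Fin n → M) → Bool)
    (l : List (Fin n)) :
    ∀ (A : Fin n → Arg M) (v : Bool),
      pollAux ε R l A = (if v then TV.top else TV.bot) →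
      ((Finset.univ.filter fun a : Fin n → M =>
          (∀ i, a i ∈ argFinset (A i)) ∧ R a ≠ v).card : ℝ) ≤
        (l.length : ℝ) * ε * ∏ i, ((argFinset (A i)).card : ℝ) := by
  induction l with
  | nil =>
      intro A v h
      rw [pollAux] at h
      by_cases hf : ∃ f : Fin n → M, ∀ i, A i = Sum.inl (f i)
      · rw [dif_pos hf] at h
        have hfA := Classical.choose_spec hf
        set f := Classical.choose hf with hfdef
        have hRv : R f = v := by
          cases v <;> cases hrf : R f <;> rw [hrf] at h <;> simp_all
        have hempty : (Finset.univ.filter fun a : Fin n → M =>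
            (∀ i, a i ∈ argFinset (A i)) ∧ R a ≠ v) = ∅ := by
          rw [Finset.filter_eq_empty_iff]
          rintro a - ⟨hmem, hne⟩
          apply hne
          have : a = f := by
            funext i
            have := hmem i
            rw [hfA i] at this
            simpa [argFinset] using this
          rw [this, hRv]
        rw [hempty]
        simp
      · rw [dif_neg hf] at h
        cases v <;> simp at h
  | cons j rest ih =>
      intro A v h
      obtain ⟨Aj, hAj, hG⟩ := pollAux_cons h
      classical
      set G := Aj.filter (fun a =>
        pollAux ε R rest (Function.update A j (Sum.inl a)) =
          (if v then TV.top else TV.bot)) with hGdef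
      set Q : ℝ := ∏ i ∈ Finset.univ.erase j, ((argFinset (A i)).card : ℝ) with hQdef
      have hQ0 : 0 ≤ Q := Finset.prod_nonneg (fun i _ => Nat.cast_nonneg _)
      have hprodA : ∏ i, ((argFinset (A i)).card : ℝ) = (Aj.card : ℝ) * Q := by
        rw [← Finset.mul_prod_erase Finset.univ _ (Finset.mem_univ j), hAj]
        rfl
      set T := Finset.univ.filter (fun a : Fin n → M =>
        (∀ i, a i ∈ argFinset (A i)) ∧ R a ≠ v) with hTdef
      have hTsum : (T.card : ℝ) = ∑ b ∈ Aj, ((T.filter fun a => a j = b).card : ℝ) := by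
        rw [← Nat.cast_sum]
        congr 1
        apply Finset.card_eq_sum_card_fiberwise
        intro x hx
        have := ((Finset.mem_filter.mp hx).2).1 j
        rw [hAj] at this
        exact this
      have hsub : ∀ b ∈ Aj, (T.filter fun a => a j = b) ⊆
          Finset.univ.filter (fun a : Fin n → M =>
            (∀ i, a i ∈ argFinset (Function.update A j (Sum.inl b) i)) ∧ R a ≠ v) := by
        intro b hb a ha
        obtain ⟨haT, haj⟩ := Finset.mem_filter.mp ha
        obtain ⟨-, hmem, hRa⟩ := Finset.mem_filter.mp haT
        refine Finset.mem_filter.mpr ⟨Finset.mem_univ _, ?_, hRa⟩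
        intro i
        by_cases hij : i = j
        · subst hij
          rw [Function.update_self]
          simp [argFinset, haj]
        · rw [Function.update_of_ne hij]
          exact hmem i
      have hprodA' : ∀ b : M, ∏ i, ((argFinset (Function.update A j (Sum.inl b) i)).card : ℝ) = Q := by
        intro b
        rw [← Finset.mul_prod_erase Finset.univ _ (Finset.mem_univ j), Function.update_self]
        have h1 : ((argFinset (Sum.inl b : Arg M)).card : ℝ) = 1 := by simp [argFinset]
        rw [h1, one_mul, hQdef]
        apply Finset.prod_congr rfl
        intro i hi
        rw [Function.update_of_ne (Finset.ne_of_mem_erase hi)]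
      have hfibG : ∀ b ∈ G, ((T.filter fun a => a j = b).card : ℝ) ≤
          (rest.length : ℝ) * ε * Q := by
        intro b hb
        have hbAj : b ∈ Aj := Finset.mem_of_mem_filter _ hb
        have hpoll : pollAux ε R rest (Function.update A j (Sum.inl b)) =
            (if v then TV.top else TV.bot) := (Finset.mem_filter.mp hb).2
        have hih := ih (Function.update A j (Sum.inl b)) v hpoll
        rw [hprodA' b] at hih
        calc ((T.filter fun a => a j = b).card : ℝ)
            ≤ _ := Nat.cast_le.mpr (Finset.card_le_card (hsub b hbAj))
          _ ≤ (rest.length : ℝ) * ε * Q := hih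
      have hfibAll : ∀ b ∈ Aj, ((T.filter fun a => a j = b).card : ℝ) ≤ Q := by
        intro b hb
        have hsub2 : (T.filter fun a => a j = b) ⊆
            Fintype.piFinset (fun i => argFinset (Function.update A j (Sum.inl b) i)) := by
          intro a ha
          have := hsub b hb ha
          rw [Fintype.mem_piFinset]
          exact (Finset.mem_filter.mp this).2.1
        calc ((T.filter fun a => a j = b).card : ℝ)
            ≤ _ := Nat.cast_le.mpr (Finset.card_le_card hsub2)
          _ = Q := by rw [Fintype.card_piFinset]; push_cast; exact hprodA' b
      have hGA : G ⊆ Aj := Finset.filter_subset _ _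
      have hsdiff : ((Aj \ G).card : ℝ) ≤ ε * (Aj.card : ℝ) := by
        have h1 : (Aj \ G).card = Aj.card - G.card := Finset.card_sdiff_of_subset hGA
        have h2 : G.card ≤ Aj.card := Finset.card_le_card hGA
        have : ((Aj \ G).card : ℝ) = (Aj.card : ℝ) - (G.card : ℝ) := by
          rw [h1, Nat.cast_sub h2]
        rw [this]
        linarith
      have hGcard : ((G.card : ℝ)) ≤ (Aj.card : ℝ) :=
        Nat.cast_le.mpr (Finset.card_le_card hGA)
      have hsplit : (T.card : ℝ) ≤
          (G.card : ℝ) * ((rest.length : ℝ) * ε * Q) + ((Aj \ G).card : ℝ) * Q := by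
        rw [hTsum]
        have hsum2 : ∑ b ∈ Aj, ((T.filter fun a => a j = b).card : ℝ)
            = ∑ b ∈ G, ((T.filter fun a => a j = b).card : ℝ)
              + ∑ b ∈ Aj \ G, ((T.filter fun a => a j = b).card : ℝ) := by
          rw [← Finset.sum_union Finset.disjoint_sdiff, Finset.union_sdiff_of_subset hGA]
        rw [hsum2]
        refine add_le_add ?_ ?_
        · calc ∑ b ∈ G, ((T.filter fun a => a j = b).card : ℝ)
              ≤ ∑ _b ∈ G, (rest.length : ℝ) * ε * Q := Finset.sum_le_sum hfibG
            _ = (G.card : ℝ) * ((rest.length : ℝ) * ε * Q) := by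
                rw [Finset.sum_const, nsmul_eq_mul]
        · calc ∑ b ∈ Aj \ G, ((T.filter fun a => a j = b).card : ℝ)
              ≤ ∑ b ∈ Aj \ G, Q :=
                Finset.sum_le_sum (fun b hb => hfibAll b (Finset.mem_sdiff.mp hb).1)
            _ = ((Aj \ G).card : ℝ) * Q := by rw [Finset.sum_const, nsmul_eq_mul]
      have hre : 0 ≤ (rest.length : ℝ) * ε * Q :=
        mul_nonneg (mul_nonneg (Nat.cast_nonneg _) hε0.le) hQ0
      calc (T.card : ℝ)
          ≤ (G.card : ℝ) * ((rest.length : ℝ) * ε * Q) + ((Aj \ G).card : ℝ) * Q := hsplit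
        _ ≤ (Aj.card : ℝ) * ((rest.length : ℝ) * ε * Q) + (ε * (Aj.card : ℝ)) * Q :=
            add_le_add (mul_le_mul_of_nonneg_right hGcard hre)
              (mul_le_mul_of_nonneg_right hsdiff hQ0)
        _ = ((j :: rest).length : ℝ) * ε * ((Aj.card : ℝ) * Q) := by
            simp only [List.length_cons]
            push_cast
            ring
        _ = ((j :: rest).length : ℝ) * ε * ∏ i, ((argFinset (A i)).card : ℝ) := by
            rw [hprodA]

/-- If every `p i` is `(ε, n, E)`-good, then the full poll on the tuple of parts
is defined. -/
lemma excellent_poll {ε : ℝ} {n : ℕ} (R : (Fin n → M) → Bool)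
    (p : Fin n → Finset M) (hp : ∀ i, IsGood ε R n (Sum.inr (p i))) :
    pollAux ε R (List.finRange n) (fun i => Sum.inr (p i)) ≠ TV.up := by
  cases n with
  | zero =>
      intro hup
      rw [List.finRange_zero, pollAux] at hup
      rw [dif_pos ⟨(fun i => i.elim0), fun i => i.elim0⟩] at hup
      split_ifs at hup <;> simp at hup
  | succ m =>
      have h0 := hp 0
      rw [IsGood] at h0
      have key := h0.2 (fun i => Sum.inr (p i)) 1
        (fun i hi => by
          have : i = 0 := Fin.ext hi
          rw [this])
        (fun i h1i h2i => by
          refine ⟨rfl, ?_⟩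
          have hgi := hp i
          rw [IsGood] at hgi
          exact hgi.1 (m + 1 - (i : ℕ)) (by omega) (by omega))
        (fun i hi => absurd i.isLt (by omega))
      intro hup
      apply key
      rw [pollValue]
      have h1 : ((List.finRange (m+1)).take (m+1)).map (1 : Equiv.Perm (Fin (m+1))).symm
          = List.finRange (m+1) := by
        rw [List.take_of_length_le (le_of_eq List.length_finRange)]
        rw [Equiv.Perm.one_symm, Equiv.Perm.coe_one, List.map_id]
      rw [h1]
      have h2 : (fun i => (fun i => Sum.inr (p i) : Fin (m+1) → Arg M)
          ((1 : Equiv.Perm (Fin (m+1))) i)) = fun i => (Sum.inr (p i) : Arg M) := by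
        funext i
        simp
      rw [h2]
      exact hup

end AuxLemmas

/-- Proposition: changes in edges due to excellence needed to get
indivisible. If `P` is an equitable partition of `𝓜` into ε-excellent parts and
`E ∈ 𝓛` has arity `n`, then there is an `n`-ary relation `E*` on `M` such that for
all tuples `⟨p_i⟩_{i<n}` of parts, `|(E Δ E*) ∩ ∏_{i<n} p_i| ≤ n·ε·∏_{i<n}|p_i|`,
and `P` is an indivisible partition of `(M, E*)`. -/
theorem statement3 {L : RelLanguage} {M : Type} [Fintype M] [DecidableEq M]
    (𝓜 : RelStructure L M)
    (ε : ℝ) (hε0 : 0 < ε) (hε : ε < 1 / 4)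
    (P : Finset (Finset M)) (hP : IsPartition P Finset.univ) (heq : IsEquitable P)
    (hexc : ∀ p ∈ P, IsExcellent ε 𝓜 (Sum.inr p))
    (E : L.Symb) :
    ∃ Estar : (Fin (L.arity E) → M) → Bool,
      (∀ p : Fin (L.arity E) → Finset M, (∀ i, p i ∈ P) →
        ((Finset.univ.filter fun a : Fin (L.arity E) → M =>
            (∀ i, a i ∈ p i) ∧ 𝓜.rel E a ≠ Estar a).card : ℝ) ≤
          (L.arity E : ℝ) * ε * ∏ i, ((p i).card : ℝ)) ∧
      IndivisibleRel P Estar :=  by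
  classical
  set n := L.arity E with hn
  set R := 𝓜.rel E with hR
  -- the part containing an element
  have hcov : ∀ x : M, ∃ q ∈ P, x ∈ q := fun x => (hP.2.2 x).1 (Finset.mem_univ x)
  set prt : M → Finset M := fun x => Classical.choose (hcov x) with hprtdef
  have hprt : ∀ x, prt x ∈ P ∧ x ∈ prt x := fun x => Classical.choose_spec (hcov x)
  have huniq : ∀ (x : M) (q : Finset M), q ∈ P → x ∈ q → prt x = q := by
    intro x q hq hx
    by_contra hne
    exact (Finset.disjoint_left.mp (hP.2.1 _ (hprt x).1 q hq hne) (hprt x).2) hx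
  refine ⟨fun a => decide (pollAux ε R (List.finRange n)
      (fun i => Sum.inr (prt (a i))) = TV.top), ?_, ?_⟩
  · intro p hp
    have hgood : ∀ i, IsGood ε R n (Sum.inr (p i)) := fun i => hexc (p i) (hp i) E
    have hpoll := excellent_poll R p hgood
    set tv := pollAux ε R (List.finRange n) (fun i => Sum.inr (p i)) with htvdef
    obtain ⟨v, hv⟩ : ∃ v : Bool, tv = (if v then TV.top else TV.bot) := by
      cases htv : tv
      · exact ⟨true, rfl⟩
      · exact ⟨false, rfl⟩
      · exact absurd htv hpoll
    have hconst : ∀ a : Fin n → M, (∀ i, a i ∈ p i) →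
        (decide (pollAux ε R (List.finRange n)
          (fun i => Sum.inr (prt (a i))) = TV.top)) = v := by
      intro a ha
      have heqf : (fun i => (Sum.inr (prt (a i)) : Arg M)) =
          fun i => (Sum.inr (p i) : Arg M) := by
        funext i
        rw [huniq (a i) (p i) (hp i) (ha i)]
      rw [heqf, ← htvdef, hv]
      cases v <;> simp
    have hfilter : (Finset.univ.filter fun a : Fin n → M =>
          (∀ i, a i ∈ p i) ∧ 𝓜.rel E a ≠ (decide (pollAux ε R (List.finRange n)
            (fun i => Sum.inr (prt (a i))) = TV.top))) =
        (Finset.univ.filter fun a : Fin n → M =>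
          (∀ i, a i ∈ argFinset (Sum.inr (p i) : Arg M)) ∧ R a ≠ v) := by
      apply Finset.filter_congr
      intro a _
      constructor
      · rintro ⟨ha, hne⟩
        exact ⟨ha, by rwa [hconst a ha] at hne⟩
      · rintro ⟨ha, hne⟩
        exact ⟨ha, by rwa [hconst a ha]⟩
    rw [hfilter]
    have hcount := pollAux_count ε hε0 R (List.finRange n)
      (fun i => Sum.inr (p i)) v (by rw [← htvdef, hv])
    calc ((Finset.univ.filter fun a : Fin n → M =>
          (∀ i, a i ∈ argFinset (Sum.inr (p i) : Arg M)) ∧ R a ≠ v).card : ℝ)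
        ≤ ((List.finRange n).length : ℝ) * ε *
            ∏ i, ((argFinset (Sum.inr (p i) : Arg M)).card : ℝ) := hcount
      _ = (n : ℝ) * ε * ∏ i, ((p i).card : ℝ) := by
          rw [List.length_finRange]
          rfl
  · intro p hp a b ha hb
    have heqf : (fun i => (Sum.inr (prt (a i)) : Arg M)) =
        fun i => (Sum.inr (prt (b i)) : Arg M) := by
      funext i
      rw [huniq (a i) (p i) (hp i) (ha i), huniq (b i) (p i) (hp i) (hb i)]
    simp only [heqf]
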